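/- Let n ≥ 1, let ∂_1^R,…,∂_n^R, ∂_1^P,…,∂_n^P be strictly positive real numbers, and let K > 0. Set p(λ) = ∏_{j=1}^{n} (λ + ∂_j^R)(λ + ∂_j^P) − K and D = ∏_{j=1}^{n} ∂_j^R ∂_j^P. Then every complex root of p has strictly negative real part if and only if D > K. -/

import Mathlib

lemma aux_abs_factor (z : ℂ) (hz : 0 ≤ z.re) (d : ℝ) (hd : 0 < d) :
    d ≤ ‖z + (d : ℂ)‖ := by
  calc d ≤ z.re + d := by linarith
    _ = (z + (d : ℂ)).re := by simp
    _ ≤ |(z + (d : ℂ)).re| := le_abs_self _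
    _ ≤ ‖z + (d : ℂ)‖ := Complex.abs_re_le_norm _

/-- Let `n ≥ 1`, let `∂_j^R, ∂_j^P > 0`, `K > 0`, and set
`p(λ) = ∏_{j=1}^n (λ + ∂_j^R)(λ + ∂_j^P) − K` and `D = ∏_{j=1}^n ∂_j^R ∂_j^P`.
Then every complex root of `p` has strictly negative real part iff `D > K`. -/
theorem even_stability_criterion (n : ℕ) (hn : 1 ≤ n)
    (dR dP : Fin n → ℝ) (hdR : ∀ j, 0 < dR j) (hdP : ∀ j, 0 < dP j)
    (K : ℝ) (hK : 0 < K) :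
    (∀ z : ℂ, (∏ j : Fin n, ((z + (dR j : ℂ)) * (z + (dP j : ℂ)))) - (K : ℂ) = 0 →
      z.re < 0) ↔ (∏ j : Fin n, dR j * dP j) > K := by
  constructor
  · intro h
    by_contra hD
    push_neg at hD
    set g : ℝ → ℝ := fun t => (∏ j : Fin n, (t + dR j) * (t + dP j)) - K with hg
    have hcont : Continuous g := by
      apply Continuous.sub _ continuous_const
      exact continuous_finset_prod _ fun j _ => by continuity
    set T : ℝ := max 1 (K + 1) with hT
    have hT1 : (1 : ℝ) ≤ T := le_max_left _ _
    have hTK : K + 1 ≤ T := le_max_right _ _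
    have hg0 : g 0 ≤ 0 := by
      simp only [hg, zero_add]
      linarith
    have hgT : 0 ≤ g T := by
      have h1 : T * T ≤ ∏ j : Fin n, (T + dR j) * (T + dP j) := by
        calc T * T = (T * T) ^ 1 := (pow_one _).symm
          _ ≤ (T * T) ^ n := pow_le_pow_right₀ (by nlinarith) hn
          _ = ∏ _j : Fin n, T * T := by
              rw [Finset.prod_const, Finset.card_univ, Fintype.card_fin]
          _ ≤ ∏ j : Fin n, (T + dR j) * (T + dP j) := by
              apply Finset.prod_le_prod
              · intro j _; positivity
              · intro j _
                have := hdR j; have := hdP j; nlinarith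
      have h2 : K ≤ T * T := by nlinarith
      simp only [hg]; linarith
    have h01 : (0:ℝ) ≤ T := by linarith
    have hsub := intermediate_value_Icc h01 hcont.continuousOn
    have h0mem : (0:ℝ) ∈ Set.Icc (g 0) (g T) := ⟨hg0, hgT⟩
    obtain ⟨t, htmem, hgt⟩ := hsub h0mem
    have hprod : (∏ j : Fin n, (t + dR j) * (t + dP j)) = K := by
      have : g t = 0 := hgt
      simp only [hg] at this; linarith
    have hz : (∏ j : Fin n, (((t:ℂ)) + (dR j : ℂ)) * (((t:ℂ)) + (dP j : ℂ))) - (K : ℂ) = 0 := by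
      have : ((∏ j : Fin n, (t + dR j) * (t + dP j) : ℝ) : ℂ) - (K : ℂ) = 0 := by
        rw [hprod]; ring
      push_cast at this
      convert this using 2
    have := h (t : ℂ) hz
    rw [Complex.ofReal_re] at this
    linarith [htmem.1]
  · intro hD z hz
    by_contra hre
    push_neg at hre
    have heq : (∏ j : Fin n, ((z + (dR j : ℂ)) * (z + (dP j : ℂ)))) = (K : ℂ) :=
      sub_eq_zero.mp hz
    have habs : ‖∏ j : Fin n, ((z + (dR j : ℂ)) * (z + (dP j : ℂ)))‖ = K := by
      rw [heq, Complex.norm_real, Real.norm_eq_abs, abs_of_pos hK]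
    have hge : (∏ j : Fin n, dR j * dP j) ≤
        ‖∏ j : Fin n, ((z + (dR j : ℂ)) * (z + (dP j : ℂ)))‖ := by
      rw [norm_prod]
      apply Finset.prod_le_prod
      · intro j _
        have := hdR j; have := hdP j; positivity
      · intro j _
        rw [norm_mul]
        exact mul_le_mul (aux_abs_factor z hre _ (hdR j)) (aux_abs_factor z hre _ (hdP j))
          (le_of_lt (hdP j)) (by positivity)
    linarith
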